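/- arXiv:1710.04521 — 2 statements merged into one kernel-verified Lean document; each statement's English description precedes it below -/
import Mathlib

section
/- Let c_i, i = 1..n, be independent chi-squared random variables with 1 degree of freedom and let a_i > 0. Define g = Σ a_i c_i. Set α = (Σ a_i³)/(Σ a_i²), β = Σ a_i − (Σ a_i²)²/(Σ a_i³), and m = (Σ a_i²)³/(Σ a_i³)². Then the affine transform α·c_m + β of a chi-squared variable c_m with m degrees of freedom matches g in mean, variance, and third central moment. -/
open MeasureTheory ProbabilityTheory Finset Real
open scoped ENNReal NNReal

lemma gamma_integral_eq {a r : ℝ} (ha : 0 < a) (hr : 0 < r) (g : ℝ → ℝ) :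
    ∫ x, g x ∂(gammaMeasure a r) = ∫ x, gammaPDFReal a r x * g x := by
  have h : gammaMeasure a r
      = volume.withDensity (fun x => ((gammaPDFReal a r x).toNNReal : ℝ≥0∞)) := rfl
  rw [h, integral_withDensity_eq_integral_smul (measurable_gammaPDFReal a r).real_toNNReal]
  refine integral_congr_ae (ae_of_all _ fun x => ?_)
  simp [NNReal.smul_def, Real.coe_toNNReal _ (gammaPDFReal_nonneg ha hr x)]

lemma gamma_integrable_iff {a r : ℝ} (ha : 0 < a) (hr : 0 < r) (g : ℝ → ℝ) :
    Integrable g (gammaMeasure a r) ↔ Integrable (fun x => gammaPDFReal a r x * g x) := by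
  have h : gammaMeasure a r
      = volume.withDensity (fun x => ((gammaPDFReal a r x).toNNReal : ℝ≥0∞)) := rfl
  rw [h, integrable_withDensity_iff_integrable_smul (measurable_gammaPDFReal a r).real_toNNReal]
  refine integrable_congr (ae_of_all _ fun x => ?_)
  simp [NNReal.smul_def, Real.coe_toNNReal _ (gammaPDFReal_nonneg ha hr x)]

lemma gamma_pdf_pow_ae {a : ℝ} (ha : 0 < a) (r : ℝ) (k : ℕ) :
    (fun x => gammaPDFReal a r x * x ^ k)
      =ᵐ[volume] Set.indicator (Set.Ioi 0)
        (fun x => r ^ a / Gamma a * (x ^ (a + k - 1) * exp (-(r * x)))) := by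
  have h0 : ∀ᵐ (x : ℝ) ∂volume, x ≠ 0 := by
    rw [ae_iff]; simpa using measure_singleton (0:ℝ)
  filter_upwards [h0] with x hx
  rw [gammaPDFReal, Set.indicator]
  by_cases hxpos : 0 < x
  · rw [if_pos hxpos.le, if_pos (Set.mem_Ioi.mpr hxpos), ← Real.rpow_natCast x k,
      show a + k - 1 = (a - 1) + (k:ℝ) by ring, Real.rpow_add hxpos]
    ring
  · have hneg : x < 0 := lt_of_le_of_ne (not_lt.mp hxpos) hx
    rw [if_neg (not_le.mpr hneg), if_neg (by simp [Set.mem_Ioi, not_lt.mpr hneg.le])]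
    ring

lemma gamma_integrable_pow {a r : ℝ} (ha : 0 < a) (hr : 0 < r) (k : ℕ) :
    Integrable (fun x => x ^ k) (gammaMeasure a r) := by
  rw [gamma_integrable_iff ha hr]
  refine (Integrable.congr ?_ (gamma_pdf_pow_ae ha r k).symm)
  rw [integrable_indicator_iff measurableSet_Ioi]
  apply Integrable.const_mul
  have base := integrableOn_rpow_mul_exp_neg_mul_rpow (p := 1) (s := a + k - 1) (b := r)
    (by push_cast; linarith) zero_lt_one hr
  refine (base.congr_fun (fun x hx => ?_) measurableSet_Ioi :)
  rw [Real.rpow_one]; ring_nf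

lemma gamma_integral_pow {a r : ℝ} (ha : 0 < a) (hr : 0 < r) (k : ℕ) :
    ∫ x, x ^ k ∂(gammaMeasure a r) = Gamma (a + k) / Gamma a / r ^ k := by
  rw [gamma_integral_eq ha hr, integral_congr_ae (gamma_pdf_pow_ae ha r k),
    integral_indicator measurableSet_Ioi, integral_const_mul,
    integral_rpow_mul_exp_neg_mul_Ioi (by push_cast; linarith) hr]
  rw [div_rpow zero_le_one hr.le, one_rpow, Real.rpow_add hr, Real.rpow_natCast]
  have hG : Gamma a ≠ 0 := (Gamma_pos_of_pos ha).ne'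
  have h1 : r ^ a ≠ 0 := (rpow_pos_of_pos hr a).ne'
  have h2 : (r:ℝ) ^ k ≠ 0 := pow_ne_zero _ hr.ne'
  field_simp

noncomputable def chiSqMeasure (k : ℝ) : Measure ℝ :=
  gammaMeasure (k / 2) (1 / 2)

lemma chiSq_isProb {d : ℝ} (hd : 0 < d) : IsProbabilityMeasure (chiSqMeasure d) :=
  isProbabilityMeasure_gammaMeasure (by linarith) (by norm_num)

lemma chiSq_integrable_pow {d : ℝ} (hd : 0 < d) (k : ℕ) :
    Integrable (fun x => x ^ k) (chiSqMeasure d) :=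
  gamma_integrable_pow (by linarith) (by norm_num) k

lemma chiSq_moment1 {d : ℝ} (hd : 0 < d) : ∫ x, x ∂(chiSqMeasure d) = d := by
  have h := gamma_integral_pow (a := d/2) (r := 1/2) (by linarith) (by norm_num) 1
  rw [show (fun x : ℝ => x) = fun x : ℝ => x ^ 1 by funext x; ring, chiSqMeasure, h]
  have h2 : d/2 ≠ 0 := by positivity
  rw [Nat.cast_one, Real.Gamma_add_one h2]
  have hG : Gamma (d/2) ≠ 0 := (Gamma_pos_of_pos (by linarith)).ne'
  field_simp

lemma chiSq_moment2 {d : ℝ} (hd : 0 < d) : ∫ x, x ^ 2 ∂(chiSqMeasure d) = d * (d + 2) := by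
  have := gamma_integral_pow (a := d/2) (r := 1/2) (by linarith) (by norm_num) 2
  rw [chiSqMeasure, this]
  have h2 : d/2 ≠ 0 := by positivity
  have h3 : d/2 + 1 ≠ 0 := by positivity
  rw [show (d/2 + (2:ℕ) : ℝ) = (d/2 + 1) + 1 by push_cast; ring, Real.Gamma_add_one h3,
    Real.Gamma_add_one h2]
  have hG : Gamma (d/2) ≠ 0 := (Gamma_pos_of_pos (by linarith)).ne'
  field_simp

lemma chiSq_moment3 {d : ℝ} (hd : 0 < d) :
    ∫ x, x ^ 3 ∂(chiSqMeasure d) = d * (d + 2) * (d + 4) := by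
  have := gamma_integral_pow (a := d/2) (r := 1/2) (by linarith) (by norm_num) 3
  rw [chiSqMeasure, this]
  have h2 : d/2 ≠ 0 := by positivity
  have h3 : d/2 + 1 ≠ 0 := by positivity
  have h4 : d/2 + 1 + 1 ≠ 0 := by positivity
  rw [show (d/2 + (3:ℕ) : ℝ) = (d/2 + 1 + 1) + 1 by push_cast; ring, Real.Gamma_add_one h4,
    Real.Gamma_add_one h3, Real.Gamma_add_one h2]
  have hG : Gamma (d/2) ≠ 0 := (Gamma_pos_of_pos (by linarith)).ne'
  field_simp
  ring

lemma central2_eq (ν : Measure ℝ) [IsProbabilityMeasure ν]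
    (h1 : Integrable (fun x => x) ν) (h2 : Integrable (fun x => x ^ 2) ν) (c : ℝ) :
    ∫ x, (x - c) ^ 2 ∂ν = (∫ x, x ^ 2 ∂ν) - 2 * c * (∫ x, x ∂ν) + c ^ 2 := by
  have e : ∀ x : ℝ, (x - c) ^ 2 = x ^ 2 - (2 * c) * x + c ^ 2 := fun x => by ring
  simp_rw [e]
  rw [integral_add (f := fun x => x ^ 2 - 2 * c * x) (g := fun _ => c ^ 2)
      (h2.sub (h1.const_mul _)) (integrable_const _),
    integral_sub (f := fun x => x ^ 2) (g := fun x => 2 * c * x) h2 (h1.const_mul _),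
    integral_const_mul, integral_const]
  simp

lemma central3_eq (ν : Measure ℝ) [IsProbabilityMeasure ν]
    (h1 : Integrable (fun x => x) ν) (h2 : Integrable (fun x => x ^ 2) ν)
    (h3 : Integrable (fun x => x ^ 3) ν) (c : ℝ) :
    ∫ x, (x - c) ^ 3 ∂ν = (∫ x, x ^ 3 ∂ν) - 3 * c * (∫ x, x ^ 2 ∂ν)
      + 3 * c ^ 2 * (∫ x, x ∂ν) - c ^ 3 := by
  have e : ∀ x : ℝ, (x - c) ^ 3
      = x ^ 3 - (3 * c) * x ^ 2 + (3 * c ^ 2) * x - c ^ 3 := fun x => by ring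
  simp_rw [e]
  rw [integral_sub (f := fun x => x ^ 3 - 3 * c * x ^ 2 + 3 * c ^ 2 * x) (g := fun _ => c ^ 3)
      (((h3.sub (h2.const_mul _)).add (h1.const_mul _))) (integrable_const _),
    integral_add (f := fun x => x ^ 3 - 3 * c * x ^ 2) (g := fun x => 3 * c ^ 2 * x)
      (h3.sub (h2.const_mul _)) (h1.const_mul _),
    integral_sub (f := fun x => x ^ 3) (g := fun x => 3 * c * x ^ 2) h3 (h2.const_mul _),
    integral_const_mul, integral_const_mul, integral_const]
  simp

lemma chiSq_central2 {d : ℝ} (hd : 0 < d) : ∫ x, (x - d) ^ 2 ∂(chiSqMeasure d) = 2 * d := by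
  have := chiSq_isProb hd
  have h1 := chiSq_integrable_pow hd 1
  simp only [pow_one] at h1
  rw [central2_eq _ h1 (chiSq_integrable_pow hd 2), chiSq_moment1 hd, chiSq_moment2 hd]
  ring

lemma chiSq_central3 {d : ℝ} (hd : 0 < d) : ∫ x, (x - d) ^ 3 ∂(chiSqMeasure d) = 8 * d := by
  have := chiSq_isProb hd
  have h1 := chiSq_integrable_pow hd 1
  simp only [pow_one] at h1
  rw [central3_eq _ h1 (chiSq_integrable_pow hd 2) (chiSq_integrable_pow hd 3),
    chiSq_moment1 hd, chiSq_moment2 hd, chiSq_moment3 hd]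
  ring

lemma chiSq1_centered_pow :
    ∀ e : ℕ, e ≤ 3 → ∫ x, (x - 1) ^ e ∂(chiSqMeasure 1)
      = if e = 0 then 1 else if e = 1 then 0 else if e = 2 then 2 else 8 := by
  have hp := chiSq_isProb one_pos
  have h1 := chiSq_integrable_pow one_pos 1
  simp only [pow_one] at h1
  intro e he
  interval_cases e
  · simp
  · have e1 : ∀ x : ℝ, (x - 1) ^ 1 = x - 1 := fun x => by ring
    simp_rw [e1]
    rw [integral_sub h1 (integrable_const _), chiSq_moment1 one_pos, integral_const]
    simp
  · simpa using chiSq_central2 one_pos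
  · simpa using chiSq_central3 one_pos

lemma chiSq1_integrable_centered_pow (e : ℕ) :
    Integrable (fun x => (x - 1) ^ e) (chiSqMeasure 1) := by
  have : ∀ x : ℝ, (x - 1) ^ e = ∑ j ∈ Finset.range (e + 1),
      (e.choose j : ℝ) * (-1) ^ (e - j) * x ^ j := by
    intro x
    rw [sub_eq_add_neg, add_pow]
    refine Finset.sum_congr rfl fun j hj => by ring_nf
  simp_rw [this]
  exact integrable_finset_sum _ fun j hj =>
    ((chiSq_integrable_pow one_pos j).const_mul _)

lemma pi_integral_prod {n : ℕ} (μ : Measure ℝ) [SigmaFinite μ] (f : Fin n → ℝ → ℝ) :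
    ∫ x : Fin n → ℝ, ∏ i, f i (x i) ∂(Measure.pi fun _ => μ) = ∏ i, ∫ t, f i t ∂μ := by
  letI : MeasureSpace ℝ := ⟨μ⟩
  letI : SigmaFinite (volume : Measure ℝ) := ‹_›
  exact MeasureTheory.integral_fintype_prod_eq_prod f

lemma pi_integrable_prod {n : ℕ} (μ : Measure ℝ) [SigmaFinite μ] {f : Fin n → ℝ → ℝ}
    (hf : ∀ i, Integrable (f i) μ) :
    Integrable (fun x : Fin n → ℝ => ∏ i, f i (x i)) (Measure.pi fun _ => μ) := by
  letI : MeasureSpace ℝ := ⟨μ⟩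
  letI : SigmaFinite (volume : Measure ℝ) := ‹_›
  exact MeasureTheory.Integrable.fintype_prod hf

section PiChiSq

variable {n : ℕ}

local notation "ν" => chiSqMeasure 1
local instance : IsProbabilityMeasure (chiSqMeasure 1) := chiSq_isProb one_pos

local notation "Π₁" => Measure.pi (fun _ : Fin n => chiSqMeasure 1)

lemma Mc0 : ∫ t, (t - 1) ^ 0 ∂ν = 1 := by simpa using chiSq1_centered_pow 0 (by norm_num)
lemma Mc1 : ∫ t, (t - 1) ^ 1 ∂ν = 0 := by simpa using chiSq1_centered_pow 1 (by norm_num)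
lemma Mc2 : ∫ t, (t - 1) ^ 2 ∂ν = 2 := by simpa using chiSq1_centered_pow 2 (by norm_num)
lemma Mc3 : ∫ t, (t - 1) ^ 3 ∂ν = 8 := by simpa using chiSq1_centered_pow 3 (by norm_num)

lemma prod_single (x : Fin n → ℝ) (i : Fin n) :
    ∏ l, (x l - 1) ^ (if i = l then 1 else 0) = x i - 1 := by
  have h : ∀ l, (x l - 1) ^ (if i = l then 1 else 0) = if i = l then x l - 1 else 1 :=
    fun l => by split_ifs <;> simp
  simp_rw [h]
  simp [Finset.prod_ite_eq]

lemma pi_b_integral (b : Fin n → ℕ) :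
    ∫ x : Fin n → ℝ, ∏ l, (x l - 1) ^ (b l) ∂Π₁ = ∏ l, ∫ t, (t - 1) ^ (b l) ∂ν :=
  pi_integral_prod _ (fun l t => (t - 1) ^ (b l))

lemma pi_b_integrable (b : Fin n → ℕ) :
    Integrable (fun x : Fin n → ℝ => ∏ l, (x l - 1) ^ (b l)) Π₁ :=
  pi_integrable_prod _ (fun l => chiSq1_integrable_centered_pow (b l))

lemma fun_eq_two (i j : Fin n) :
    (fun x : Fin n → ℝ => (x i - 1) * (x j - 1))
      = fun x => ∏ l, (x l - 1) ^ ((if i = l then 1 else 0) + (if j = l then 1 else 0)) := by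
  funext x
  simp_rw [pow_add, Finset.prod_mul_distrib, prod_single]

lemma fun_eq_three (i j k : Fin n) :
    (fun x : Fin n → ℝ => (x i - 1) * (x j - 1) * (x k - 1))
      = fun x => ∏ l, (x l - 1) ^
        ((if i = l then 1 else 0) + (if j = l then 1 else 0) + (if k = l then 1 else 0)) := by
  funext x
  simp_rw [pow_add, Finset.prod_mul_distrib, prod_single]

lemma integrable_one' (i : Fin n) :
    Integrable (fun x : Fin n → ℝ => x i - 1) Π₁ := by
  have h := pi_b_integrable (fun l => if i = l then 1 else 0)
  refine h.congr (ae_of_all _ fun x => ?_)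
  simp [prod_single]

lemma integral_one' (i : Fin n) : ∫ x : Fin n → ℝ, (x i - 1) ∂Π₁ = 0 := by
  have h : (fun x : Fin n → ℝ => x i - 1)
      = fun x => ∏ l, (x l - 1) ^ (if i = l then 1 else 0) := by
    funext x; rw [prod_single]
  rw [h, pi_b_integral]
  refine Finset.prod_eq_zero (Finset.mem_univ i) ?_
  simp only [if_pos rfl]
  exact Mc1

lemma integrable_two (i j : Fin n) :
    Integrable (fun x : Fin n → ℝ => (x i - 1) * (x j - 1)) Π₁ := by
  rw [fun_eq_two]; exact pi_b_integrable _

lemma integrable_three (i j k : Fin n) :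
    Integrable (fun x : Fin n → ℝ => (x i - 1) * (x j - 1) * (x k - 1)) Π₁ := by
  rw [fun_eq_three]; exact pi_b_integrable _

lemma integral_two (i j : Fin n) :
    ∫ x : Fin n → ℝ, (x i - 1) * (x j - 1) ∂Π₁ = if i = j then 2 else 0 := by
  rw [fun_eq_two, pi_b_integral]
  by_cases hij : i = j
  · subst hij
    rw [if_pos rfl]
    have h : ∀ l, ((if i = l then 1 else 0) + (if i = l then 1 else 0) : ℕ)
        = if i = l then 2 else 0 := fun l => by split_ifs <;> rfl
    simp_rw [h]
    have h2 : ∀ l : Fin n, ∫ t, (t - 1) ^ (if i = l then 2 else 0) ∂ν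
        = if i = l then 2 else 1 := by
      intro l; split_ifs
      · exact Mc2
      · exact Mc0
    simp_rw [h2]
    simp [Finset.prod_ite_eq]
  · rw [if_neg hij]
    refine Finset.prod_eq_zero (Finset.mem_univ i) ?_
    have : ((if i = i then 1 else 0) + (if j = i then 1 else 0) : ℕ) = 1 := by
      simp [Ne.symm hij]
    rw [this, Mc1]

lemma integral_three (i j k : Fin n) :
    ∫ x : Fin n → ℝ, (x i - 1) * (x j - 1) * (x k - 1) ∂Π₁
      = if i = j then (if j = k then 8 else 0) else 0 := by
  rw [fun_eq_three, pi_b_integral]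
  by_cases hij : i = j
  · subst hij
    by_cases hjk : i = k
    · subst hjk
      rw [if_pos rfl, if_pos rfl]
      have h : ∀ l, ((if i = l then 1 else 0) + (if i = l then 1 else 0)
          + (if i = l then 1 else 0) : ℕ) = if i = l then 3 else 0 := fun l => by
        split_ifs <;> rfl
      simp_rw [h]
      have h2 : ∀ l : Fin n, ∫ t, (t - 1) ^ (if i = l then 3 else 0) ∂ν
          = if i = l then 8 else 1 := by
        intro l; split_ifs
        · exact Mc3
        · exact Mc0
      simp_rw [h2]
      simp [Finset.prod_ite_eq]
    · rw [if_pos rfl, if_neg hjk]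
      refine Finset.prod_eq_zero (Finset.mem_univ k) ?_
      have : ((if i = k then 1 else 0) + (if i = k then 1 else 0)
          + (if k = k then 1 else 0) : ℕ) = 1 := by simp [hjk]
      rw [this, Mc1]
  · rw [if_neg hij]
    by_cases hik : i = k
    · subst hik
      refine Finset.prod_eq_zero (Finset.mem_univ j) ?_
      have : ((if i = j then 1 else 0) + (if j = j then 1 else 0)
          + (if i = j then 1 else 0) : ℕ) = 1 := by simp [hij]
      rw [this, Mc1]
    · refine Finset.prod_eq_zero (Finset.mem_univ i) ?_
      have : ((if i = i then 1 else 0) + (if j = i then 1 else 0)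
          + (if k = i then 1 else 0) : ℕ) = 1 := by simp [Ne.symm hij, Ne.symm hik]
      rw [this, Mc1]

end PiChiSq

set_option maxHeartbeats 1600000 in
/-- Zhang's approximation: for independent `χ²₁` variables `c_i` and `a_i > 0`, with
`α = (Σ a_i³)/(Σ a_i²)`, `β = Σ a_i − (Σ a_i²)²/(Σ a_i³)` and `m = (Σ a_i²)³/(Σ a_i³)²`,
the affine transform `α·c_m + β` of a chi-squared variable with `m` degrees of freedom
matches `g = Σ a_i c_i` in mean, variance and third central moment. -/
theorem zhang_moment_matching {n : ℕ} (hn : 0 < n) (a : Fin n → ℝ) (ha : ∀ i, 0 < a i)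
    (α β m : ℝ)
    (hα : α = (∑ i, (a i) ^ 3) / (∑ i, (a i) ^ 2))
    (hβ : β = (∑ i, a i) - (∑ i, (a i) ^ 2) ^ 2 / (∑ i, (a i) ^ 3))
    (hm : m = (∑ i, (a i) ^ 2) ^ 3 / (∑ i, (a i) ^ 3) ^ 2)
    (μg μh : Measure ℝ)
    (hg : μg = Measure.map (fun x : Fin n → ℝ => ∑ i, a i * x i)
      (Measure.pi fun _ => chiSqMeasure 1))
    (hh : μh = Measure.map (fun x : ℝ => α * x + β) (chiSqMeasure m)) :
    (∫ x, x ∂μg) = (∫ x, x ∂μh) ∧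
    (∫ x, (x - ∫ y, y ∂μg) ^ 2 ∂μg) = (∫ x, (x - ∫ y, y ∂μh) ^ 2 ∂μh) ∧
    (∫ x, (x - ∫ y, y ∂μg) ^ 3 ∂μg) = (∫ x, (x - ∫ y, y ∂μh) ^ 3 ∂μh) := by
  haveI : IsProbabilityMeasure (chiSqMeasure 1) := chiSq_isProb one_pos
  have huniv : (Finset.univ : Finset (Fin n)).Nonempty := Finset.univ_nonempty_iff.mpr
    ⟨⟨0, hn⟩⟩
  set S1 := ∑ i, a i with hS1
  set S2 := ∑ i, (a i) ^ 2 with hS2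
  set S3 := ∑ i, (a i) ^ 3 with hS3
  have hS2pos : 0 < S2 := Finset.sum_pos (fun i _ => pow_pos (ha i) 2) huniv
  have hS3pos : 0 < S3 := Finset.sum_pos (fun i _ => pow_pos (ha i) 3) huniv
  have hmpos : 0 < m := by
    rw [hm]; exact div_pos (pow_pos hS2pos 3) (pow_pos hS3pos 2)
  haveI : IsProbabilityMeasure (chiSqMeasure m) := chiSq_isProb hmpos
  have hTmeas : Measurable (fun x : Fin n → ℝ => ∑ i, a i * x i) :=
    Finset.measurable_sum _ (fun i _ => (measurable_pi_apply i : Measurable fun x : Fin n → ℝ => x i).const_mul (a i))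
  have hAmeas : Measurable (fun x : ℝ => α * x + β) :=
    (measurable_id.const_mul α).add_const β
  -- decomposition of the sum
  have hdec : ∀ x : Fin n → ℝ, (∑ i, a i * x i) = (∑ i, a i * (x i - 1)) + S1 := by
    intro x
    rw [hS1, ← Finset.sum_add_distrib]
    exact Finset.sum_congr rfl fun i _ => by ring
  -- mean of μg
  have hg1 : ∫ x, x ∂μg = S1 := by
    rw [hg, integral_map (f := fun y : ℝ => y) hTmeas.aemeasurable aestronglyMeasurable_id]
    calc ∫ x : Fin n → ℝ, (∑ i, a i * x i) ∂(Measure.pi fun _ => chiSqMeasure 1)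
        = ∫ x : Fin n → ℝ, ((∑ i, a i * (x i - 1)) + S1)
            ∂(Measure.pi fun _ => chiSqMeasure 1) := by
          exact integral_congr_ae (ae_of_all _ fun x => hdec x)
      _ = S1 := by
          rw [integral_add (integrable_finset_sum _
              (fun i _ => (integrable_one' i).const_mul (a i))) (integrable_const _),
            integral_finset_sum _ (fun i _ => (integrable_one' i).const_mul (a i))]
          simp [integral_const_mul, integral_one']
  -- mean of μh
  have hh1 : ∫ x, x ∂μh = α * m + β := by
    rw [hh, integral_map (f := fun y : ℝ => y) hAmeas.aemeasurable aestronglyMeasurable_id]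
    have h1 := chiSq_integrable_pow hmpos 1
    simp only [pow_one] at h1
    rw [integral_add (h1.const_mul α) (integrable_const _), integral_const_mul,
      chiSq_moment1 hmpos, integral_const]
    simp
  have hmean : α * m + β = S1 := by
    rw [hα, hβ, hm]
    field_simp
    ring
  have hg1' : ∫ x, x ∂μg = S1 := hg1
  have hh1' : ∫ x, x ∂μh = S1 := by rw [hh1, hmean]
  refine ⟨by rw [hg1', hh1'], ?_, ?_⟩
  · -- variance
    rw [hg1', hh1']
    have lhs : ∫ x, (x - S1) ^ 2 ∂μg = 2 * S2 := by
      rw [hg, integral_map (f := fun y : ℝ => (y - S1) ^ 2) hTmeas.aemeasurable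
        (((continuous_id.sub continuous_const).pow 2).aestronglyMeasurable)]
      have expand : ∀ x : Fin n → ℝ, ((∑ i, a i * x i) - S1) ^ 2
          = ∑ i, ∑ j, (a i * a j) * ((x i - 1) * (x j - 1)) := by
        intro x
        have h0 : (∑ i, a i * x i) - S1 = ∑ i, a i * (x i - 1) := by
          rw [hdec x]; ring
        rw [h0, sq, Finset.sum_mul_sum]
        exact Finset.sum_congr rfl fun i _ =>
          Finset.sum_congr rfl fun j _ => by ring
      rw [integral_congr_ae (ae_of_all _ fun x => expand x),
        integral_finset_sum _ (fun i _ => integrable_finset_sum _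
          (fun j _ => (integrable_two i j).const_mul _))]
      have : ∀ i, ∫ x : Fin n → ℝ, (∑ j, (a i * a j) * ((x i - 1) * (x j - 1)))
          ∂(Measure.pi fun _ => chiSqMeasure 1)
          = ∑ j, (a i * a j) * (if i = j then 2 else 0) := by
        intro i
        rw [integral_finset_sum _ (fun j _ => (integrable_two i j).const_mul _)]
        exact Finset.sum_congr rfl fun j _ => by
          rw [integral_const_mul, integral_two]
      simp_rw [this]
      simp only [mul_ite, mul_zero, Finset.sum_ite_eq, Finset.mem_univ, if_true]
      rw [hS2, Finset.mul_sum]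
      exact Finset.sum_congr rfl fun i _ => by ring
    have rhs : ∫ x, (x - S1) ^ 2 ∂μh = 2 * S2 := by
      rw [hh, integral_map (f := fun y : ℝ => (y - S1) ^ 2) hAmeas.aemeasurable
        (((continuous_id.sub continuous_const).pow 2).aestronglyMeasurable)]
      have e : ∀ t : ℝ, (α * t + β - S1) ^ 2 = α ^ 2 * (t - m) ^ 2 := by
        intro t; rw [← hmean]; ring
      rw [integral_congr_ae (ae_of_all _ fun t => e t), integral_const_mul,
        chiSq_central2 hmpos]
      rw [hα, hm]
      field_simp
    rw [lhs, rhs]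
  · -- third central moment
    rw [hg1', hh1']
    have lhs : ∫ x, (x - S1) ^ 3 ∂μg = 8 * S3 := by
      rw [hg, integral_map (f := fun y : ℝ => (y - S1) ^ 3) hTmeas.aemeasurable
        (((continuous_id.sub continuous_const).pow 3).aestronglyMeasurable)]
      have expand : ∀ x : Fin n → ℝ, ((∑ i, a i * x i) - S1) ^ 3
          = ∑ i, ∑ j, ∑ k, (a i * a j * a k)
              * ((x i - 1) * (x j - 1) * (x k - 1)) := by
        intro x
        have h0 : (∑ i, a i * x i) - S1 = ∑ i, a i * (x i - 1) := by
          rw [hdec x]; ring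
        rw [h0, show (∑ i, a i * (x i - 1)) ^ 3
          = ((∑ i, a i * (x i - 1)) * (∑ i, a i * (x i - 1))) * (∑ i, a i * (x i - 1))
            by ring, Finset.sum_mul_sum, Finset.sum_mul]
        refine Finset.sum_congr rfl fun i _ => ?_
        rw [Finset.sum_mul]
        refine Finset.sum_congr rfl fun j _ => ?_
        rw [Finset.mul_sum]
        exact Finset.sum_congr rfl fun k _ => by ring
      rw [integral_congr_ae (ae_of_all _ fun x => expand x),
        integral_finset_sum _ (fun i _ => integrable_finset_sum _
          (fun j _ => integrable_finset_sum _
            (fun k _ => (integrable_three i j k).const_mul _)))]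
      have step : ∀ i, ∫ x : Fin n → ℝ,
          (∑ j, ∑ k, (a i * a j * a k) * ((x i - 1) * (x j - 1) * (x k - 1)))
          ∂(Measure.pi fun _ => chiSqMeasure 1)
          = ∑ j, ∑ k, (a i * a j * a k)
              * (if i = j then (if j = k then 8 else 0) else 0) := by
        intro i
        rw [integral_finset_sum _ (fun j _ => integrable_finset_sum _
          (fun k _ => (integrable_three i j k).const_mul _))]
        refine Finset.sum_congr rfl fun j _ => ?_
        rw [integral_finset_sum _ (fun k _ => (integrable_three i j k).const_mul _)]
        exact Finset.sum_congr rfl fun k _ => by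
          rw [integral_const_mul, integral_three]
      simp_rw [step]
      simp only [mul_ite, mul_zero, Finset.sum_ite_eq, Finset.mem_univ, if_true,
        Finset.sum_ite_irrel, Finset.sum_const_zero, Finset.sum_ite_eq]
      rw [hS3, Finset.mul_sum]
      exact Finset.sum_congr rfl fun i _ => by ring
    have rhs : ∫ x, (x - S1) ^ 3 ∂μh = 8 * S3 := by
      rw [hh, integral_map (f := fun y : ℝ => (y - S1) ^ 3) hAmeas.aemeasurable
        (((continuous_id.sub continuous_const).pow 3).aestronglyMeasurable)]
      have e : ∀ t : ℝ, (α * t + β - S1) ^ 3 = α ^ 3 * (t - m) ^ 3 := by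
        intro t; rw [← hmean]; ring
      rw [integral_congr_ae (ae_of_all _ fun t => e t), integral_const_mul,
        chiSq_central3 hmpos]
      rw [hα, hm]
      field_simp
    rw [lhs, rhs]
end

section
/- The function h(λ) = Σ_{i∈I} (w'Σ_i w)/(1 + λ w'Σ_i w) + Σ_{i∈I} (w'(ŷ − μ_i))² / (1 + λ w'Σ_i w)² is continuous and strictly decreasing on λ ∈ (−1/max_i(w'Σ_i w), ∞), tends to +∞ as λ approaches the left endpoint, and tends to 0 as λ → ∞; hence for any v > 0 there is a unique λ in this interval with h(λ) = |I|·v. -/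
open Matrix Finset Set Filter

/-- The function `h(λ) = Σ_{i∈I} (w'Σ_i w)/(1 + λ w'Σ_i w)
+ Σ_{i∈I} (w'(ŷ − μ_i))²/(1 + λ w'Σ_i w)²` is continuous and strictly decreasing on
`(−1/max_i(w'Σ_i w), ∞)`, tends to `+∞` at the left endpoint and to `0` at `+∞`; hence for
every `v > 0` there is a unique `λ` in this interval with `h(λ) = |I|·v`. -/
theorem spread_multiplier_equation {d : ℕ} {ι : Type*} [DecidableEq ι]
    (I : Finset ι) (hI : I.Nonempty)
    (S : ι → Matrix (Fin d) (Fin d) ℝ) (hS : ∀ i ∈ I, (S i).PosDef)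
    (w : Fin d → ℝ) (hw : w ⬝ᵥ w = 1) (yhat : Fin d → ℝ) (μ : ι → Fin d → ℝ)
    (h : ℝ → ℝ)
    (hh : ∀ lam : ℝ, h lam =
      (∑ i ∈ I, (w ⬝ᵥ (S i *ᵥ w)) / (1 + lam * (w ⬝ᵥ (S i *ᵥ w)))) +
        ∑ i ∈ I, (w ⬝ᵥ (yhat - μ i)) ^ 2 / (1 + lam * (w ⬝ᵥ (S i *ᵥ w))) ^ 2)
    (M : ℝ) (hM : M = I.sup' hI fun i => w ⬝ᵥ (S i *ᵥ w)) :
    ContinuousOn h (Ioi (-M⁻¹)) ∧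
    StrictAntiOn h (Ioi (-M⁻¹)) ∧
    Tendsto h (nhdsWithin (-M⁻¹) (Ioi (-M⁻¹))) atTop ∧
    Tendsto h atTop (nhds 0) ∧
    (∀ v : ℝ, 0 < v → ∃! lam : ℝ, lam ∈ Ioi (-M⁻¹) ∧ h lam = (I.card : ℝ) * v) := by
  set a : ι → ℝ := fun i => w ⬝ᵥ (S i *ᵥ w) with ha_def
  have hw0 : w ≠ 0 := by
    intro h0
    rw [h0] at hw
    simp at hw
  have ha : ∀ i ∈ I, 0 < a i := by
    intro i hi
    have := (hS i hi).dotProduct_mulVec_pos hw0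
    simpa [star_trivial] using this
  have haM : ∀ i ∈ I, a i ≤ M := by
    intro i hi
    rw [hM]
    exact Finset.le_sup' _ hi
  obtain ⟨i0, hi0, hMi0⟩ := Finset.exists_mem_eq_sup' hI a
  rw [← hM] at hMi0
  have hM0 : 0 < M := hMi0 ▸ ha i0 hi0
  -- positivity of the denominators
  have hden : ∀ lam ∈ Ioi (-M⁻¹), ∀ i ∈ I, 0 < 1 + lam * a i := by
    intro lam hlam i hi
    have hlam' : -M⁻¹ < lam := hlam
    have h1 : -1 < lam * M := by
      have : (-M⁻¹) * M < lam * M := by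
        exact mul_lt_mul_of_pos_right hlam' hM0
      rwa [neg_mul, inv_mul_cancel₀ hM0.ne'] at this
    rcases le_or_gt 0 lam with hl | hl
    · have : 0 ≤ lam * a i := mul_nonneg hl (ha i hi).le
      linarith
    · have : lam * M ≤ lam * a i := mul_le_mul_of_nonpos_left (haM i hi) hl.le
      linarith
  have hfun : h = fun lam : ℝ =>
      (∑ i ∈ I, a i / (1 + lam * a i)) +
        ∑ i ∈ I, (w ⬝ᵥ (yhat - μ i)) ^ 2 / (1 + lam * a i) ^ 2 := funext hh
  -- Continuity
  have hcont : ContinuousOn h (Ioi (-M⁻¹)) := by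
    rw [hfun]
    apply ContinuousOn.add
    · apply continuousOn_finset_sum
      intro i hi
      exact ContinuousOn.div continuousOn_const (by fun_prop)
        fun lam hlam => (hden lam hlam i hi).ne'
    · apply continuousOn_finset_sum
      intro i hi
      exact ContinuousOn.div continuousOn_const (by fun_prop)
        fun lam hlam => (pow_pos (hden lam hlam i hi) 2).ne'
  -- Strict antitonicity
  have hanti : StrictAntiOn h (Ioi (-M⁻¹)) := by
    intro x hx y hy hxy
    rw [hfun]
    simp only
    apply add_lt_add_of_lt_of_le
    · apply Finset.sum_lt_sum_of_nonempty hI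
      intro i hi
      apply div_lt_div_of_pos_left (ha i hi) (hden x hx i hi)
      have := (ha i hi)
      nlinarith
    · apply Finset.sum_le_sum
      intro i hi
      apply div_le_div_of_nonneg_left (by positivity) (pow_pos (hden x hx i hi) 2)
      have h1 := hden x hx i hi
      have h2 : 1 + x * a i ≤ 1 + y * a i := by nlinarith [ha i hi]
      exact pow_le_pow_left₀ h1.le h2 2
  -- Tendsto atTop at left endpoint
  have htop : Tendsto h (nhdsWithin (-M⁻¹) (Ioi (-M⁻¹))) atTop := by
    have hg : Tendsto (fun lam : ℝ => 1 + lam * M) (nhdsWithin (-M⁻¹) (Ioi (-M⁻¹)))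
        (nhdsWithin 0 (Ioi 0)) := by
      rw [tendsto_nhdsWithin_iff]
      constructor
      · have : Tendsto (fun lam : ℝ => 1 + lam * M) (nhds (-M⁻¹))
            (nhds (1 + (-M⁻¹) * M)) :=
          (continuous_const.add (continuous_id.mul continuous_const)).tendsto _
        rw [neg_mul, inv_mul_cancel₀ hM0.ne'] at this
        simpa using this.mono_left nhdsWithin_le_nhds
      · filter_upwards [self_mem_nhdsWithin] with lam hlam
        exact hMi0 ▸ hden lam hlam i0 hi0
    have hginv : Tendsto (fun lam : ℝ => M * (1 + lam * M)⁻¹)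
        (nhdsWithin (-M⁻¹) (Ioi (-M⁻¹))) atTop :=
      (hg.inv_tendsto_nhdsGT_zero).const_mul_atTop hM0
    apply tendsto_atTop_mono' _ _ hginv
    filter_upwards [self_mem_nhdsWithin] with lam hlam
    rw [hfun]
    have h1 : M * (1 + lam * M)⁻¹ = a i0 / (1 + lam * a i0) := by
      rw [← hMi0, div_eq_mul_inv]
    rw [h1]
    have h2 : a i0 / (1 + lam * a i0) ≤ ∑ i ∈ I, a i / (1 + lam * a i) :=
      Finset.single_le_sum (f := fun i => a i / (1 + lam * a i))
        (fun i hi => div_nonneg (ha i hi).le (hden lam hlam i hi).le) hi0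
    have h3 : 0 ≤ ∑ i ∈ I, (w ⬝ᵥ (yhat - μ i)) ^ 2 / (1 + lam * a i) ^ 2 :=
      Finset.sum_nonneg fun i hi => div_nonneg (by positivity)
        (pow_pos (hden lam hlam i hi) 2).le
    linarith
  -- Tendsto 0 at atTop
  have hzero : Tendsto h atTop (nhds 0) := by
    rw [hfun]
    have key : ∀ i ∈ I, Tendsto (fun lam : ℝ => 1 + lam * a i) atTop atTop := by
      intro i hi
      exact tendsto_atTop_add_const_left _ _ (tendsto_id.atTop_mul_const (ha i hi))
    have t1 : Tendsto (fun lam : ℝ => ∑ i ∈ I, a i / (1 + lam * a i)) atTop (nhds 0) := by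
      have : Tendsto (fun lam : ℝ => ∑ i ∈ I, a i / (1 + lam * a i)) atTop
          (nhds (∑ i ∈ I, (0 : ℝ))) := by
        apply tendsto_finset_sum
        intro i hi
        have : Tendsto (fun lam : ℝ => a i * (1 + lam * a i)⁻¹) atTop (nhds (a i * 0)) :=
          (tendsto_inv_atTop_zero.comp (key i hi)).const_mul _
        simpa [div_eq_mul_inv] using this
      simpa using this
    have t2 : Tendsto (fun lam : ℝ => ∑ i ∈ I, (w ⬝ᵥ (yhat - μ i)) ^ 2 / (1 + lam * a i) ^ 2)
        atTop (nhds 0) := by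
      have : Tendsto (fun lam : ℝ => ∑ i ∈ I, (w ⬝ᵥ (yhat - μ i)) ^ 2 / (1 + lam * a i) ^ 2)
          atTop (nhds (∑ i ∈ I, (0 : ℝ))) := by
        apply tendsto_finset_sum
        intro i hi
        have hsq : Tendsto (fun lam : ℝ => (1 + lam * a i) ^ 2) atTop atTop := by
          have := (key i hi).atTop_mul_atTop₀ (key i hi)
          simpa [pow_two] using this
        have : Tendsto (fun lam : ℝ => (w ⬝ᵥ (yhat - μ i)) ^ 2 * ((1 + lam * a i) ^ 2)⁻¹)
            atTop (nhds ((w ⬝ᵥ (yhat - μ i)) ^ 2 * 0)) :=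
          (tendsto_inv_atTop_zero.comp hsq).const_mul _
        simpa [div_eq_mul_inv] using this
      simpa using this
    simpa using t1.add t2
  refine ⟨hcont, hanti, htop, hzero, ?_⟩
  -- existence and uniqueness
  intro v hv
  set c : ℝ := (I.card : ℝ) * v with hc
  have hc0 : 0 < c := by
    apply mul_pos _ hv
    exact_mod_cast Finset.card_pos.mpr hI
  -- find x1 near the left endpoint with h x1 > c
  have hev1 : ∀ᶠ lam in nhdsWithin (-M⁻¹) (Ioi (-M⁻¹)), c < h lam ∧ lam ∈ Ioi (-M⁻¹) :=
    (htop.eventually_gt_atTop c).and self_mem_nhdsWithin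
  obtain ⟨x1, hx1c, hx1⟩ := hev1.exists
  -- find x2 > x1 with h x2 < c
  have hev2 : ∀ᶠ lam in atTop, h lam < c ∧ x1 < lam :=
    (hzero.eventually (gt_mem_nhds hc0)).and (eventually_gt_atTop x1)
  obtain ⟨x2, hx2c, hx12⟩ := hev2.exists
  have hx2 : x2 ∈ Ioi (-M⁻¹) := lt_trans hx1 hx12
  have hIcc : Icc x1 x2 ⊆ Ioi (-M⁻¹) := fun z hz => lt_of_lt_of_le hx1 hz.1
  have hivt : Icc (h x2) (h x1) ⊆ h '' Icc x1 x2 :=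
    intermediate_value_Icc' hx12.le (hcont.mono hIcc)
  obtain ⟨lam, hlamI, hlamc⟩ := hivt ⟨hx2c.le, hx1c.le⟩
  refine ⟨lam, ⟨hIcc hlamI, hlamc⟩, ?_⟩
  intro y ⟨hy, hyc⟩
  exact hanti.injOn hy (hIcc hlamI) (by rw [hyc, hlamc])
end
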